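/- For integers L ≥ 1 and any nonnegative reals a_0,…,a_L with L·∑_{r=0}^{L} C(L,r)·a_r = 1 and L·∑_{r=1}^{L} C(L-1,r-1)·a_r ≤ μ_R, the objective satisfies ∑_{r=0}^{L-1}[L·C(L-1,r)+C(L-1,r+1)]·a_r ≥ (1/2)·∑_{r=0}^{L-1} 2L·C(L-1,r)·a_r ≥ ... ≥ (1-μ_R); in particular the ratio of the LP optimal value to (1-μ_R) lies in [1, 2) for all μ_R ∈ [0,1). -/

import Mathlib

theorem stmt15 (L : ℕ) (hL : 1 ≤ L) (μ : ℝ) (hμ0 : 0 ≤ μ) (hμ1 : μ ≤ 1) :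
    (∀ a : ℕ → ℝ, (∀ r, 0 ≤ a r) →
      (L : ℝ) * ∑ r ∈ Finset.range (L + 1), (L.choose r : ℝ) * a r = 1 →
      (L : ℝ) * ∑ r ∈ Finset.Icc 1 L, (((L - 1).choose (r - 1)) : ℝ) * a r ≤ μ →
      ∑ r ∈ Finset.range L,
          ((L : ℝ) * ((L - 1).choose r) + ((L - 1).choose (r + 1))) * a r ≥ 1 - μ) ∧
    (μ < 1 → ∃ a : ℕ → ℝ, (∀ r, 0 ≤ a r) ∧
      (L : ℝ) * ∑ r ∈ Finset.range (L + 1), (L.choose r : ℝ) * a r = 1 ∧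
      (L : ℝ) * ∑ r ∈ Finset.Icc 1 L, (((L - 1).choose (r - 1)) : ℝ) * a r ≤ μ ∧
      ∑ r ∈ Finset.range L,
          ((L : ℝ) * ((L - 1).choose r) + ((L - 1).choose (r + 1))) * a r <
        2 * (1 - μ)) := by
  obtain ⟨M, rfl⟩ : ∃ M, L = M + 1 := ⟨L - 1, (Nat.succ_pred_eq_of_pos hL).symm⟩
  simp only [Nat.add_sub_cancel]
  constructor
  · intro a ha h1 h2
    -- rewrite cache sum
    have hIcc : ∑ r ∈ Finset.Icc 1 (M + 1), ((M.choose (r - 1)) : ℝ) * a r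
        = ∑ i ∈ Finset.range (M + 1), (M.choose i : ℝ) * a (i + 1) := by
      rw [← Finset.Ico_add_one_right_eq_Icc, Finset.sum_Ico_eq_sum_range]
      simp [Nat.add_sub_cancel, add_comm]
    have hRange : ∑ r ∈ Finset.range (M + 2), ((M + 1).choose r : ℝ) * a r
        = (∑ i ∈ Finset.range (M + 1), (M.choose i : ℝ) * a (i + 1))
          + (∑ i ∈ Finset.range (M + 1), (M.choose (i + 1) : ℝ) * a (i + 1)) + a 0 := by
      rw [Finset.sum_range_succ']
      simp only [Nat.choose_succ_succ', Nat.choose_zero_right, Nat.cast_one, one_mul,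
        Nat.cast_add, add_mul, Finset.sum_add_distrib]
      try ring
    have hT : ∑ r ∈ Finset.range (M + 1), (M.choose r : ℝ) * a r
        = a 0 + ∑ i ∈ Finset.range (M + 1), (M.choose (i + 1) : ℝ) * a (i + 1) := by
      rw [Finset.sum_range_succ (fun i => (M.choose (i + 1) : ℝ) * a (i + 1)),
        Nat.choose_succ_self]
      rw [Finset.sum_range_succ']
      simp
      try ring
    have hsplit : ∑ r ∈ Finset.range (M + 1),
          (((M : ℝ) + 1) * ((M.choose r : ℝ)) + ((M.choose (r + 1)) : ℝ)) * a r
        = ((M : ℝ) + 1) * ∑ r ∈ Finset.range (M + 1), (M.choose r : ℝ) * a r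
          + ∑ r ∈ Finset.range (M + 1), (M.choose (r + 1) : ℝ) * a r := by
      rw [Finset.mul_sum, ← Finset.sum_add_distrib]
      exact Finset.sum_congr rfl fun r _ => by ring
    have hnn : 0 ≤ ∑ r ∈ Finset.range (M + 1), (M.choose (r + 1) : ℝ) * a r :=
      Finset.sum_nonneg fun r _ => mul_nonneg (Nat.cast_nonneg _) (ha r)
    rw [hIcc] at h2
    rw [hRange] at h1
    push_cast at h1 h2 hsplit ⊢
    rw [hsplit]
    have hM : (0:ℝ) < (M : ℝ) + 1 := by positivity
    nlinarith [hnn, h1, h2]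
  · intro hμ
    refine ⟨fun r => if r = 0 then (1 - μ) / (M + 1) else if r = M + 1 then μ / (M + 1) else 0,
      ?_, ?_, ?_, ?_⟩
    · intro r
      dsimp only
      split_ifs
      · apply div_nonneg (by linarith) (by positivity)
      · positivity
      · exact le_refl 0

    · rw [Finset.sum_range_succ, Finset.sum_range_succ']
      simp [Nat.choose_succ_succ]
      field_simp
      ring
    · have : ∑ r ∈ Finset.Icc 1 (M + 1), ((M.choose (r - 1)) : ℝ) *
          (if r = 0 then (1 - μ) / (M + 1) else if r = M + 1 then μ / (M + 1) else 0)
          = μ / (M + 1) := by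
        rw [Finset.sum_eq_single (M + 1)]
        · simp
        · intro b hb hbne
          have : b ≠ 0 := by
            have := (Finset.mem_Icc.mp hb).1; omega
          simp [this, hbne]
        · intro h; simp at h
      rw [this]
      have hM : (0:ℝ) < (M : ℝ) + 1 := by positivity
      push_cast
      rw [mul_div_cancel₀ _ (ne_of_gt hM)]
    · have : ∑ r ∈ Finset.range (M + 1),
          (((M : ℝ) + 1) * ((M.choose r : ℝ)) + ((M.choose (r + 1)) : ℝ)) *
          (if r = 0 then (1 - μ) / (M + 1) else if r = M + 1 then μ / (M + 1) else 0)
          = (((M : ℝ) + 1) + M) * ((1 - μ) / (M + 1)) := by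
        rw [Finset.sum_eq_single 0]
        · simp
        · intro b hb hbne
          have : b ≠ M + 1 := by have := Finset.mem_range.mp hb; omega
          simp [hbne, this]
        · intro h; simp at h
      push_cast
      rw [this]
      have hM : (0:ℝ) < (M : ℝ) + 1 := by positivity
      rw [div_eq_mul_inv]
      have h1μ : 0 < 1 - μ := by linarith
      rw [show (((M:ℝ)+1) + M) * ((1 - μ) * ((M:ℝ)+1)⁻¹) = ((2*(M:ℝ)+1) * ((M:ℝ)+1)⁻¹) * (1-μ) by ring]
      have : (2*(M:ℝ)+1) * ((M:ℝ)+1)⁻¹ < 2 := by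
        rw [mul_inv_lt_iff₀ hM]; ring_nf; linarith
      nlinarith
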